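/- For all integers $p, q \geq 3$, the function $\bar{k}_{p,q}(r,t) = \frac{t^2 r^2 (1 - r^{p-1} t^{q-1})}{(p-1)(1-r^2)t^2 + (q-1)(1-t^2)r^2}$ is nondecreasing in $t$ on $(0,1)$ for each fixed $r \in (0,1)$, i.e. $\frac{\partial}{\partial t} \bar{k}_{p,q}(r,t) \geq 0$. -/

import Mathlib

/-- Bernoulli-type bound: `r^n * (1 + n*(1-r)) ≤ 1` for `0 < r ≤ 1`. -/
lemma bern_aux (r : ℝ) (h0 : 0 < r) (h1 : r ≤ 1) (n : ℕ) :
    r ^ n * (1 + n * (1 - r)) ≤ 1 := by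
  induction n with
  | zero => simp
  | succ n ih =>
    have h2 : r ^ n ≤ 1 := pow_le_one₀ h0.le h1
    have h3 : (0:ℝ) ≤ r ^ n := pow_nonneg h0.le n
    have h4 : r ^ (n+1) = r ^ n * r := pow_succ r n
    rw [pow_succ]
    push_cast
    nlinarith [mul_le_mul_of_nonneg_left ih h0.le,
      mul_le_mul_of_nonneg_right h2 (mul_nonneg h0.le (sub_nonneg.2 h1)),
      sq_nonneg (1 - r)]

set_option maxHeartbeats 1000000 in
theorem stmt_8 (p q : ℕ) (hp : 3 ≤ p) (hq : 3 ≤ q) (r : ℝ) (hr : r ∈ Set.Ioo (0 : ℝ) 1) :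
    MonotoneOn (fun t : ℝ =>
      t ^ 2 * r ^ 2 * (1 - r ^ (p - 1) * t ^ (q - 1)) /
        (((p : ℝ) - 1) * (1 - r ^ 2) * t ^ 2 + ((q : ℝ) - 1) * (1 - t ^ 2) * r ^ 2))
      (Set.Ioo (0 : ℝ) 1) := by
  obtain ⟨hr0, hr1⟩ := hr
  obtain ⟨P, rfl⟩ : ∃ P, p = P + 3 := ⟨p - 3, by omega⟩
  obtain ⟨Q, rfl⟩ : ∃ Q, q = Q + 3 := ⟨q - 3, by omega⟩
  simp only [show P + 3 - 1 = P + 2 by omega, show Q + 3 - 1 = Q + 2 by omega]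
  have hr2 : (0:ℝ) < 1 - r ^ 2 := by nlinarith
  -- the explicit derivative
  set E : ℝ → ℝ := fun t =>
    (((Q:ℝ)+2) * r ^ 2 * t * (2 * r ^ 2 -
        (((Q:ℝ)+4) * r ^ 2 + ((P:ℝ)+2) * t ^ 2 - ((P:ℝ)+(Q:ℝ)+4) * r ^ 2 * t ^ 2)
          * (r ^ (P+2) * t ^ (Q+2)))) /
      (((↑(P+3):ℝ) - 1) * (1 - r ^ 2) * t ^ 2 + ((↑(Q+3):ℝ) - 1) * (1 - t ^ 2) * r ^ 2) ^ 2
    with hE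
  have key : ∀ t ∈ Set.Ioo (0:ℝ) 1,
      HasDerivAt (fun t : ℝ =>
        t ^ 2 * r ^ 2 * (1 - r ^ (P + 2) * t ^ (Q + 2)) /
          ((↑(P + 3) - 1) * (1 - r ^ 2) * t ^ 2 + (↑(Q + 3) - 1) * (1 - t ^ 2) * r ^ 2))
        (E t) t := by
    intro t ht
    obtain ⟨ht0, ht1⟩ := ht
    have hD0 : 0 < ((↑(P+3):ℝ) - 1) * (1 - r ^ 2) * t ^ 2 + ((↑(Q+3):ℝ) - 1) * (1 - t ^ 2) * r ^ 2 := by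
      have h1 : (0:ℝ) < ((↑(P+3):ℝ) - 1) * (1 - r ^ 2) * t ^ 2 := by
        push_cast
        nlinarith [mul_pos (mul_pos (show (0:ℝ) < (P:ℝ)+2 by positivity) hr2) (pow_pos ht0 2)]
      have h2 : (0:ℝ) ≤ ((↑(Q+3):ℝ) - 1) * (1 - t ^ 2) * r ^ 2 := by
        push_cast
        nlinarith [mul_nonneg (mul_nonneg (show (0:ℝ) ≤ (Q:ℝ)+2 by positivity)
          (show (0:ℝ) ≤ 1 - t^2 by nlinarith)) (sq_nonneg r)]
      linarith
    have hN : HasDerivAt (fun t : ℝ => t ^ 2 * r ^ 2 * (1 - r ^ (P + 2) * t ^ (Q + 2)))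
        ((↑2 * t ^ (2-1) * r ^ 2) * (1 - r ^ (P+2) * t ^ (Q+2))
          + (t ^ 2 * r ^ 2) * (-(r ^ (P+2) * (↑(Q+2) * t ^ (Q+2-1))))) t :=
      ((hasDerivAt_pow 2 t).mul_const (r ^ 2)).mul
        (((hasDerivAt_pow (Q+2) t).const_mul (r ^ (P+2))).const_sub 1)
    have hDen : HasDerivAt (fun t : ℝ =>
        ((↑(P+3):ℝ) - 1) * (1 - r ^ 2) * t ^ 2 + ((↑(Q+3):ℝ) - 1) * (1 - t ^ 2) * r ^ 2)
        ((((↑(P+3):ℝ) - 1) * (1 - r ^ 2)) * (↑2 * t ^ (2-1))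
          + (((↑(Q+3):ℝ) - 1) * (-(↑2 * t ^ (2-1)))) * r ^ 2) t :=
      (((hasDerivAt_pow 2 t).const_mul (((↑(P+3):ℝ) - 1) * (1 - r ^ 2))).add
        ((((hasDerivAt_pow 2 t).const_sub 1).const_mul ((↑(Q+3):ℝ) - 1)).mul_const (r ^ 2)))
    have h := hN.div hDen hD0.ne'
    convert h using 1
    · rfl
    · rfl
    · rfl
    rw [hE]
    rw [div_eq_div_iff (by positivity) (by positivity)]
    push_cast
    ring
  apply monotoneOn_of_deriv_nonneg (convex_Ioo 0 1)
  · intro t ht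
    exact ((key t ht).differentiableAt.continuousAt).continuousWithinAt
  · rw [interior_Ioo]
    intro t ht
    exact (key t ht).differentiableAt.differentiableWithinAt
  · rw [interior_Ioo]
    intro t ht
    rw [(key t ht).deriv]
    obtain ⟨ht0, ht1⟩ := ht
    rw [hE]
    apply div_nonneg _ (by positivity)
    have ha' : r ^ (P+2) = r ^ P * r ^ 2 := pow_add r P 2
    have hb' : t ^ (Q+2) = t ^ Q * t ^ 2 := pow_add t Q 2
    have hA0 := bern_aux r hr0 hr1.le P
    have hB0 := bern_aux t ht0 ht1.le (Q+2)
    set X : ℝ := (P:ℝ) * (1 - r) with hXd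
    set Y : ℝ := ((Q:ℝ)+2) * (1 - t) with hYd
    have hX : 0 ≤ X := mul_nonneg (Nat.cast_nonneg P) (by linarith)
    have hY : 0 ≤ Y := mul_nonneg (by positivity) (by linarith)
    have hA : (r ^ P * r ^ 2) * (1 + X) ≤ r ^ 2 := by nlinarith [sq_nonneg r]
    have hB : (t ^ Q * t ^ 2) * (1 + Y) ≤ 1 := by
      have : t ^ (Q+2) * (1 + Y) ≤ 1 := by
        rw [hYd]; push_cast at hB0 ⊢; linarith
      rwa [hb'] at this
    have ha1 : (0:ℝ) ≤ r ^ P * r ^ 2 := by positivity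
    have hb1 : (0:ℝ) ≤ t ^ Q * t ^ 2 := by positivity
    have hC : ((Q:ℝ)+4) * r ^ 2 + ((P:ℝ)+2) * t ^ 2 - ((P:ℝ)+(Q:ℝ)+4) * r ^ 2 * t ^ 2
        ≤ 2 * (1 + X) * (1 + Y) := by
      have hA2 : (0:ℝ) ≤ (1-t) * (2 - r ^ 2 * (1+t)) := mul_nonneg (by linarith) (by nlinarith)
      have hB2 : (0:ℝ) ≤ (1-r) * (2 - t ^ 2 * (1+r)) := mul_nonneg (by linarith) (by nlinarith)
      nlinarith [mul_nonneg hX hY, mul_nonneg (Nat.cast_nonneg (α := ℝ) Q) hA2,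
        mul_nonneg (Nat.cast_nonneg (α := ℝ) P) hB2, sq_nonneg (1-t),
        mul_nonneg (by nlinarith : (0:ℝ) ≤ 1 - t ^ 2) hr2.le]
    have step1 : (((Q:ℝ)+4) * r ^ 2 + ((P:ℝ)+2) * t ^ 2 - ((P:ℝ)+(Q:ℝ)+4) * r ^ 2 * t ^ 2)
        * ((r ^ P * r ^ 2) * (t ^ Q * t ^ 2))
        ≤ 2 * (1 + X) * (1 + Y) * ((r ^ P * r ^ 2) * (t ^ Q * t ^ 2)) :=
      mul_le_mul_of_nonneg_right hC (mul_nonneg ha1 hb1)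
    have step2 : ((r ^ P * r ^ 2) * (1 + X)) * ((t ^ Q * t ^ 2) * (1 + Y)) ≤ r ^ 2 * 1 :=
      mul_le_mul hA hB (mul_nonneg hb1 (by linarith)) (by positivity)
    rw [ha', hb']
    have hfin : (0:ℝ) ≤ 2 * r ^ 2 -
        (((Q:ℝ)+4) * r ^ 2 + ((P:ℝ)+2) * t ^ 2 - ((P:ℝ)+(Q:ℝ)+4) * r ^ 2 * t ^ 2)
          * ((r ^ P * r ^ 2) * (t ^ Q * t ^ 2)) := by nlinarith [step1, step2]
    have hpos : (0:ℝ) ≤ ((Q:ℝ)+2) * r ^ 2 * t := by positivity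
    exact mul_nonneg hpos hfin
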